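/- Let n ≥ 4, let V be an n-dimensional real vector space with a nondegenerate symmetric bilinear form g, and let B be a generalized curvature tensor on V satisfying B = (φ/2)·Ric(B)∧Ric(B) + μ·g∧Ric(B) + (η/2)·g∧g with φ ≠ 0, Ric(B) ≠ (κ(B)/n)·g and Weyl(B) ≠ 0. Define L_B = φ⁻¹((n−2)(μ² − φη) − μ), L = L_B + φ⁻¹μ, α₁ = κ(B) + φ⁻¹((n−2)μ − 1), and L_{Weyl(B)} = L_B + (1/(n−2))(κ(B)/(n−1) − α₁). Then L + L_{Weyl(B)} − 1/((n−2)φ) = 2L_B − κ(B)/(n−1), and Weyl(B)·B + B·Weyl(B) = Q(Ric(B), Weyl(B)) + (L + L_{Weyl(B)} − 1/((n−2)φ))·Q(g, Weyl(B)). -/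

import Mathlib

namespace OVAff

variable {V : Type*} [AddCommGroup V] [Module ℝ V]

/-- Kulkarni–Nomizu product of two (0,2)-tensors. -/
noncomputable def KN (E F : V → V → ℝ) : V → V → V → V → ℝ := fun X₁ X₂ X₃ X₄ =>
  E X₁ X₄ * F X₂ X₃ + E X₂ X₃ * F X₁ X₄ - E X₁ X₃ * F X₂ X₄ - E X₂ X₄ * F X₁ X₃

/-- Kulkarni–Nomizu product of a (0,2)-tensor with a (0,4)-tensor. -/
noncomputable def KN4 (E : V → V → ℝ) (T : V → V → V → V → ℝ) :
    V → V → V → V → V → V → ℝ := fun X₁ X₂ X₃ X₄ Y₁ Y₂ =>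
  E X₁ X₄ * T X₂ X₃ Y₁ Y₂ + E X₂ X₃ * T X₁ X₄ Y₁ Y₂
    - E X₁ X₃ * T X₂ X₄ Y₁ Y₂ - E X₂ X₄ * T X₁ X₃ Y₁ Y₂

/-- (X ∧_A Y) Z = A(Y,Z) X − A(X,Z) Y. -/
noncomputable def wedgeVec (A : V → V → ℝ) (X Y Z : V) : V := A Y Z • X - A X Z • Y

/-- Tachibana operator Q(A,T) on a (0,2)-tensor T. -/
noncomputable def Q2 (A T : V → V → ℝ) : V → V → V → V → ℝ :=
  fun X₁ X₂ X Y => -(T (wedgeVec A X Y X₁) X₂ + T X₁ (wedgeVec A X Y X₂))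

/-- Tachibana operator Q(A,T) on a (0,4)-tensor T. -/
noncomputable def Q4 (A : V → V → ℝ) (T : V → V → V → V → ℝ) :
    V → V → V → V → V → V → ℝ := fun X₁ X₂ X₃ X₄ X Y =>
  -(T (wedgeVec A X Y X₁) X₂ X₃ X₄ + T X₁ (wedgeVec A X Y X₂) X₃ X₄
    + T X₁ X₂ (wedgeVec A X Y X₃) X₄ + T X₁ X₂ X₃ (wedgeVec A X Y X₄))

/-- The derivation B·T of a curvature operator family ℬ (with h(ℬ(X,Y)Z,W)=B(X,Y,Z,W))
acting on a (0,2)-tensor T. -/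
noncomputable def dot2 (ℬ : V → V → V → V) (T : V → V → ℝ) : V → V → V → V → ℝ :=
  fun X₁ X₂ X Y => -(T (ℬ X Y X₁) X₂ + T X₁ (ℬ X Y X₂))

/-- The derivation B·T acting on a (0,4)-tensor T. -/
noncomputable def dot4 (ℬ : V → V → V → V) (T : V → V → V → V → ℝ) :
    V → V → V → V → V → V → ℝ := fun X₁ X₂ X₃ X₄ X Y =>
  -(T (ℬ X Y X₁) X₂ X₃ X₄ + T X₁ (ℬ X Y X₂) X₃ X₄
    + T X₁ X₂ (ℬ X Y X₃) X₄ + T X₁ X₂ X₃ (ℬ X Y X₄))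

/-- Ricci contraction of a (0,4)-tensor with respect to an h-orthonormal basis `e`
with signs `ε`. -/
noncomputable def ricci {n : ℕ} (ε : Fin n → ℝ) (e : Fin n → V)
    (B : V → V → V → V → ℝ) : V → V → ℝ :=
  fun X Y => ∑ j, ε j * B (e j) X Y (e j)

/-- Scalar curvature of a (0,4)-tensor. -/
noncomputable def scal {n : ℕ} (ε : Fin n → ℝ) (e : Fin n → V)
    (B : V → V → V → V → ℝ) : ℝ :=
  ∑ j, ε j * ricci ε e B (e j) (e j)

/-- Weyl tensor of a (0,4)-tensor with respect to the metric h. -/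
noncomputable def weyl {n : ℕ} (h : V → V → ℝ) (ε : Fin n → ℝ) (e : Fin n → V)
    (B : V → V → V → V → ℝ) : V → V → V → V → ℝ := fun X₁ X₂ X₃ X₄ =>
  B X₁ X₂ X₃ X₄ - (1 / ((n : ℝ) - 2)) * KN h (ricci ε e B) X₁ X₂ X₃ X₄
    + (scal ε e B / (2 * ((n : ℝ) - 2) * ((n : ℝ) - 1))) * KN h h X₁ X₂ X₃ X₄


set_option maxHeartbeats 4000000 in
/-- anticommutator identity for a Roter-type generalized curvature tensor. -/
theorem statement15
    {V : Type*} [AddCommGroup V] [Module ℝ V]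
    (n : ℕ) (hn : 4 ≤ n)
    (g : LinearMap.BilinForm ℝ V)
    (hgsymm : ∀ X Y, g X Y = g Y X)
    (hgnd : ∀ X : V, (∀ Y, g X Y = 0) → X = 0)
    (e : Module.Basis (Fin n) ℝ V) (ε : Fin n → ℝ)
    (hε : ∀ j, ε j = 1 ∨ ε j = -1)
    (he : ∀ j k, g (e j) (e k) = if j = k then ε j else 0)
    (B : V →ₗ[ℝ] V →ₗ[ℝ] V →ₗ[ℝ] V →ₗ[ℝ] ℝ)
    (Bf : V → V → V → V → ℝ) (hBf : Bf = fun X₁ X₂ X₃ X₄ => B X₁ X₂ X₃ X₄)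
    (hB1 : ∀ X₁ X₂ X₃ X₄, Bf X₁ X₂ X₃ X₄ = - Bf X₂ X₁ X₃ X₄)
    (hB2 : ∀ X₁ X₂ X₃ X₄, Bf X₁ X₂ X₃ X₄ = Bf X₃ X₄ X₁ X₂)
    (hB3 : ∀ X₁ X₂ X₃ X₄, Bf X₁ X₂ X₃ X₄ + Bf X₂ X₃ X₁ X₄ + Bf X₃ X₁ X₂ X₄ = 0)
    (Ric : V → V → ℝ) (hRic : Ric = ricci ε (⇑e) Bf)
    (κ : ℝ) (hκ : κ = scal ε (⇑e) Bf)
    (Wl : V → V → V → V → ℝ) (hWl : Wl = weyl (fun X Y => g X Y) ε (⇑e) Bf)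
    (φ μ η : ℝ) (hφ : φ ≠ 0)
    (hRoter : ∀ X₁ X₂ X₃ X₄, Bf X₁ X₂ X₃ X₄
      = (φ / 2) * KN Ric Ric X₁ X₂ X₃ X₄
        + μ * KN (fun X Y => g X Y) Ric X₁ X₂ X₃ X₄
        + (η / 2) * KN (fun X Y => g X Y) (fun X Y => g X Y) X₁ X₂ X₃ X₄)
    (hRicne : ¬ ∀ X Y, Ric X Y = (κ / (n : ℝ)) * g X Y)
    (hWlne : ¬ ∀ X₁ X₂ X₃ X₄, Wl X₁ X₂ X₃ X₄ = 0)
    (ℬB : V → V → V → V) (hℬB : ∀ X Y Z W, g (ℬB X Y Z) W = Bf X Y Z W)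
    (ℬW : V → V → V → V) (hℬW : ∀ X Y Z W, g (ℬW X Y Z) W = Wl X Y Z W)
    (LB L α₁ LW : ℝ)
    (hLB : LB = φ⁻¹ * (((n : ℝ) - 2) * (μ ^ 2 - φ * η) - μ))
    (hL : L = LB + φ⁻¹ * μ)
    (hα₁ : α₁ = κ + φ⁻¹ * (((n : ℝ) - 2) * μ - 1))
    (hLW : LW = LB + (1 / ((n : ℝ) - 2)) * (κ / ((n : ℝ) - 1) - α₁)) :
    (L + LW - 1 / (((n : ℝ) - 2) * φ) = 2 * LB - κ / ((n : ℝ) - 1)) ∧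
    (∀ X₁ X₂ X₃ X₄ X Y,
      dot4 ℬW Bf X₁ X₂ X₃ X₄ X Y + dot4 ℬB Wl X₁ X₂ X₃ X₄ X Y
        = Q4 Ric Wl X₁ X₂ X₃ X₄ X Y
          + (L + LW - 1 / (((n : ℝ) - 2) * φ))
            * Q4 (fun X Y => g X Y) Wl X₁ X₂ X₃ X₄ X Y) := by
  classical
  have hn4 : (4:ℝ) ≤ (n:ℝ) := by exact_mod_cast hn
  have hN2 : ((n:ℝ) - 2) ≠ 0 := by intro h; linarith
  have hN1 : ((n:ℝ) - 1) ≠ 0 := by intro h; linarith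
  have part1 : L + LW - 1 / (((n : ℝ) - 2) * φ) = 2 * LB - κ / ((n : ℝ) - 1) := by
    subst hLW hL hα₁ hLB
    field_simp
    ring
  refine ⟨part1, ?_⟩
  have hBf' : ∀ x1 x2 x3 x4, Bf x1 x2 x3 x4 = B x1 x2 x3 x4 := by
    rw [hBf]; intro _ _ _ _; rfl
  have h1 : ∀ a b, Ric a b = ∑ j, ε j * Bf (e j) a b (e j) := by
    intro a b; rw [hRic]; rfl
  have hB34 : ∀ x1 x2 x3 x4, Bf x1 x2 x3 x4 = - Bf x1 x2 x4 x3 := by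
    intro x1 x2 x3 x4
    rw [hB2 x1 x2 x3 x4, hB1 x3 x4 x1 x2, hB2 x4 x3 x1 x2]
  have hRsymm : ∀ a b, Ric a b = Ric b a := by
    intro a b
    rw [h1, h1]
    refine Finset.sum_congr rfl fun j _ => ?_
    congr 1
    rw [hB34 (e j) a b (e j), hB2 (e j) a (e j) b,
      show Bf (e j) b a (e j) = - Bf (e j) b (e j) a from hB34 _ _ _ _]
  have hRadd1 : ∀ u v b, Ric (u + v) b = Ric u b + Ric v b := by
    intro u v b
    simp only [h1, hBf', map_add, LinearMap.add_apply, ← Finset.sum_add_distrib]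
    exact Finset.sum_congr rfl fun j _ => by ring
  have hRsmul1 : ∀ (c : ℝ) (u b : V), Ric (c • u) b = c * Ric u b := by
    intro c u b
    simp only [h1, hBf', map_smul, LinearMap.smul_apply, smul_eq_mul, Finset.mul_sum]
    exact Finset.sum_congr rfl fun j _ => by ring
  have hRadd2 : ∀ a u v, Ric a (u + v) = Ric a u + Ric a v := by
    intro a u v
    simp only [h1, hBf', map_add, LinearMap.add_apply, ← Finset.sum_add_distrib]
    exact Finset.sum_congr rfl fun j _ => by ring
  have hRsmul2 : ∀ (a : V) (c : ℝ) (u : V), Ric a (c • u) = c * Ric a u := by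
    intro a c u
    simp only [h1, hBf', map_smul, LinearMap.smul_apply, smul_eq_mul, Finset.mul_sum]
    exact Finset.sum_congr rfl fun j _ => by ring
  have hRsub1 : ∀ u v b, Ric (u - v) b = Ric u b - Ric v b := by
    intro u v b
    rw [sub_eq_add_neg, ← neg_one_smul ℝ v, hRadd1, hRsmul1]; ring
  have hRsub2 : ∀ a u v, Ric a (u - v) = Ric a u - Ric a v := by
    intro a u v
    rw [sub_eq_add_neg, ← neg_one_smul ℝ v, hRadd2, hRsmul2]; ring
  have hgadd1 : ∀ u v b, g (u + v) b = g u b + g v b := by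
    intro u v b; simp
  have hgsmul1 : ∀ (c : ℝ) (u b : V), g (c • u) b = c * g u b := by
    intro c u b; simp
  have hrep : ∀ a : V, ∑ j, (ε j * g (e j) a) • e j = a := by
    intro a
    have hg : ∀ j, g (e j) a = e.repr a j * ε j := by
      intro j
      conv_lhs => rw [← e.sum_repr a]
      rw [map_sum]
      simp only [map_smul, smul_eq_mul, he, mul_ite, mul_zero]
      simp [Finset.sum_ite_eq]
    conv_rhs => rw [← e.sum_repr a]
    refine Finset.sum_congr rfl fun j _ => ?_
    congr 1
    rw [hg j]
    rcases hε j with h | h <;> rw [h] <;> ring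
  have sumout : ∀ (F : V → V → ℝ), (∀ u v b, F (u + v) b = F u b + F v b) →
      (∀ (c : ℝ) (u b : V), F (c • u) b = c * F u b) →
      ∀ (cf : Fin n → ℝ) (b : V), F (∑ j, cf j • e j) b = ∑ j, cf j * F (e j) b := by
    intro F hadd hsmul cf b
    have h0 : F 0 b = 0 := by
      have h := hsmul 0 0 b; simpa using h
    have key : ∀ s : Finset (Fin n),
        F (∑ j ∈ s, cf j • e j) b = ∑ j ∈ s, cf j * F (e j) b := by
      intro s
      induction s using Finset.induction_on with
      | empty => simpa using h0
      | @insert j s hj ih =>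
        rw [Finset.sum_insert hj, Finset.sum_insert hj, hadd, hsmul, ih]
    exact key Finset.univ
  have hgsum : ∀ (cf : Fin n → ℝ) (b : V),
      g (∑ j, cf j • e j) b = ∑ j, cf j * g (e j) b :=
    fun cf b => sumout (fun u w => g u w) hgadd1 hgsmul1 cf b
  have hRsum : ∀ (cf : Fin n → ℝ) (b : V),
      Ric (∑ j, cf j • e j) b = ∑ j, cf j * Ric (e j) b :=
    fun cf b => sumout Ric hRadd1 hRsmul1 cf b
  set S : V → V := fun a => ∑ j, (ε j * Ric a (e j)) • e j with hS
  have hgS1 : ∀ a b, g (S a) b = Ric a b := by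
    intro a b
    simp only [hS]
    rw [hgsum]
    calc ∑ j, ε j * Ric a (e j) * g (e j) b
        = ∑ j, (ε j * g (e j) b) * Ric (e j) a :=
          Finset.sum_congr rfl fun j _ => by rw [hRsymm a (e j)]; ring
      _ = Ric (∑ j, (ε j * g (e j) b) • e j) a := (hRsum _ _).symm
      _ = Ric b a := by rw [hrep]
      _ = Ric a b := (hRsymm a b).symm
  have hgS2 : ∀ a b, g a (S b) = Ric a b := by
    intro a b
    rw [hgsymm a (S b), hgS1, hRsymm b a]
  have Sκ : ∑ j, ε j * Ric (e j) (e j) = κ := by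
    rw [hκ, hRic]; rfl
  have Sn : ∑ j, ε j * g (e j) (e j) = (n:ℝ) := by
    have h2 : ∀ j : Fin n, ε j * g (e j) (e j) = 1 := by
      intro j
      rw [he j j]
      simp only [if_pos rfl]
      rcases hε j with h | h <;> rw [h] <;> norm_num
    rw [Finset.sum_congr rfl fun j _ => h2 j]
    simp
  have SRR : ∀ a b, ∑ j, ε j * (Ric (e j) a * Ric (e j) b) = Ric (S a) b := by
    intro a b
    simp only [hS]
    rw [hRsum]
    refine Finset.sum_congr rfl fun j _ => ?_
    rw [hRsymm a (e j)]; ring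
  have SgR : ∀ a b, ∑ j, ε j * (g (e j) a * Ric (e j) b) = Ric a b := by
    intro a b
    calc ∑ j, ε j * (g (e j) a * Ric (e j) b)
        = ∑ j, (ε j * g (e j) a) * Ric (e j) b :=
          Finset.sum_congr rfl fun j _ => by ring
      _ = Ric (∑ j, (ε j * g (e j) a) • e j) b := (hRsum _ _).symm
      _ = Ric a b := by rw [hrep]
  have Sgg : ∀ a b : V, ∑ j, ε j * (g (e j) a * g (e j) b) = g a b := by
    intro a b
    calc ∑ j, ε j * (g (e j) a * g (e j) b)
        = ∑ j, (ε j * g (e j) a) * g (e j) b :=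
          Finset.sum_congr rfl fun j _ => by ring
      _ = g (∑ j, (ε j * g (e j) a) • e j) b := (hgsum _ _).symm
      _ = g a b := by rw [hrep]
  have key : ∀ a b, Ric a b
      = (φ * Ric a b) * κ - φ * Ric (S a) b + (μ * Ric a b) * (n:ℝ)
        + (μ * g a b) * κ - μ * Ric b a - μ * Ric a b
        + (η * g a b) * (n:ℝ) - η * g a b := by
    intro a b
    conv_lhs => rw [h1 a b]
    have step : ∑ j, ε j * Bf (e j) a b (e j)
        = ∑ j, ((φ * Ric a b) * (ε j * Ric (e j) (e j))
            - φ * (ε j * (Ric (e j) a * Ric (e j) b))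
            + (μ * Ric a b) * (ε j * g (e j) (e j))
            + (μ * g a b) * (ε j * Ric (e j) (e j))
            - μ * (ε j * (g (e j) b * Ric (e j) a))
            - μ * (ε j * (g (e j) a * Ric (e j) b))
            + (η * g a b) * (ε j * g (e j) (e j))
            - η * (ε j * (g (e j) a * g (e j) b))) := by
      refine Finset.sum_congr rfl fun j _ => ?_
      rw [hRoter (e j) a b (e j)]
      simp only [KN]
      rw [hRsymm a (e j), hgsymm a (e j)]
      ring
    rw [step]
    simp only [Finset.sum_add_distrib, Finset.sum_sub_distrib, ← Finset.mul_sum]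
    rw [Sκ, Sn, SRR a b, SgR b a, SgR a b, Sgg a b]
  have hRS1 : ∀ a b, Ric (S a) b
      = (κ + φ⁻¹ * (((n:ℝ) - 2) * μ - 1)) * Ric a b
        + (φ⁻¹ * (μ * κ + ((n:ℝ) - 1) * η)) * g a b := by
    intro a b
    have hk := key a b
    rw [hRsymm b a] at hk
    have hinv : φ⁻¹ * φ = 1 := inv_mul_cancel₀ hφ
    have hmid : φ * Ric (S a) b
        = (φ * κ + ((n:ℝ) - 2) * μ - 1) * Ric a b
          + (μ * κ + ((n:ℝ) - 1) * η) * g a b := by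
      linear_combination hk
    linear_combination φ⁻¹ * hmid + (κ * Ric a b - Ric (S a) b) * hinv
  have hRS2 : ∀ a b, Ric a (S b)
      = (κ + φ⁻¹ * (((n:ℝ) - 2) * μ - 1)) * Ric a b
        + (φ⁻¹ * (μ * κ + ((n:ℝ) - 1) * η)) * g a b := by
    intro a b
    rw [hRsymm a (S b), hRS1, hRsymm b a, hgsymm b a]
  have hWlR : ∀ a b c d, Wl a b c d
      = (φ / 2) * KN Ric Ric a b c d
        + (μ - 1 / ((n:ℝ) - 2)) * KN (fun X Y => g X Y) Ric a b c d
        + ((η + κ / (((n:ℝ) - 2) * ((n:ℝ) - 1))) / 2)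
            * KN (fun X Y => g X Y) (fun X Y => g X Y) a b c d := by
    intro a b c d
    rw [hWl]
    show weyl (fun X Y => g X Y) ε ⇑e Bf a b c d = _
    unfold weyl
    rw [← hRic, ← hκ, hRoter]
    simp only [KN]
    field_simp
    ring
  obtain ⟨A1, hA1⟩ : ∃ x : ℝ, x = κ + φ⁻¹ * (((n:ℝ) - 2) * μ - 1) := ⟨_, rfl⟩
  obtain ⟨A2, hA2⟩ : ∃ x : ℝ, x = φ⁻¹ * (μ * κ + ((n:ℝ) - 1) * η) := ⟨_, rfl⟩
  obtain ⟨Mp, hMp⟩ : ∃ x : ℝ, x = μ - 1 / ((n:ℝ) - 2) := ⟨_, rfl⟩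
  obtain ⟨Ep, hEp⟩ : ∃ x : ℝ, x = η + κ / (((n:ℝ) - 2) * ((n:ℝ) - 1)) := ⟨_, rfl⟩
  simp only [← hA1, ← hA2] at hRS1 hRS2
  simp only [← hMp, ← hEp] at hWlR
  have hBB : ∀ Xa Yb Z, ℬB Xa Yb Z
      = (φ * Ric Yb Z + μ * g Yb Z) • S Xa - (φ * Ric Xa Z + μ * g Xa Z) • S Yb
        + (μ * Ric Yb Z + η * g Yb Z) • Xa - (μ * Ric Xa Z + η * g Xa Z) • Yb := by
    intro Xa Yb Z
    have hW : ∀ W, g (ℬB Xa Yb Z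
        - ((φ * Ric Yb Z + μ * g Yb Z) • S Xa - (φ * Ric Xa Z + μ * g Xa Z) • S Yb
          + (μ * Ric Yb Z + η * g Yb Z) • Xa - (μ * Ric Xa Z + η * g Xa Z) • Yb)) W = 0 := by
      intro W
      rw [map_sub, LinearMap.sub_apply, hℬB]
      simp only [map_add, map_sub, map_smul, LinearMap.add_apply, LinearMap.sub_apply,
        LinearMap.smul_apply, smul_eq_mul, hgS1]
      rw [hRoter Xa Yb Z W]
      simp only [KN]
      ring
    exact sub_eq_zero.mp (hgnd _ hW)
  have hBW : ∀ Xa Yb Z, ℬW Xa Yb Z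
      = (φ * Ric Yb Z + Mp * g Yb Z) • S Xa - (φ * Ric Xa Z + Mp * g Xa Z) • S Yb
        + (Mp * Ric Yb Z + Ep * g Yb Z) • Xa - (Mp * Ric Xa Z + Ep * g Xa Z) • Yb := by
    intro Xa Yb Z
    have hW : ∀ W, g (ℬW Xa Yb Z
        - ((φ * Ric Yb Z + Mp * g Yb Z) • S Xa - (φ * Ric Xa Z + Mp * g Xa Z) • S Yb
          + (Mp * Ric Yb Z + Ep * g Yb Z) • Xa - (Mp * Ric Xa Z + Ep * g Xa Z) • Yb)) W = 0 := by
      intro W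
      rw [map_sub, LinearMap.sub_apply, hℬW]
      simp only [map_add, map_sub, map_smul, LinearMap.add_apply, LinearMap.sub_apply,
        LinearMap.smul_apply, smul_eq_mul, hgS1]
      rw [hWlR Xa Yb Z W]
      simp only [KN]
      ring
    exact sub_eq_zero.mp (hgnd _ hW)
  obtain ⟨q4, hq4⟩ : ∃ q : V → V → V → V → ℝ, q = fun x₁ x₂ X Y =>
      g X x₁ * Ric Y x₂ + g X x₂ * Ric x₁ Y - g Y x₁ * Ric X x₂ - g Y x₂ * Ric x₁ X := ⟨_, rfl⟩
  have hBRR : ∀ x₁ x₂ x₃ x₄ X Y : V, dot4 ℬB (KN Ric Ric) x₁ x₂ x₃ x₄ X Y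
      = (-2*φ*A2 + 2*μ*A1 + 2*η) * KN4 Ric q4 x₁ x₂ x₃ x₄ X Y := by
    intro x₁ x₂ x₃ x₄ X Y
    simp only [dot4, hBB]
    simp only [KN, KN4, hq4]
    simp only [map_add, map_sub, map_smul, LinearMap.add_apply, LinearMap.sub_apply,
      LinearMap.smul_apply, smul_eq_mul, hRadd1, hRadd2, hRsub1, hRsub2, hRsmul1, hRsmul2]
    simp only [hgS1, hgS2, hRS1, hRS2]
    simp only [hRsymm x₂ x₁, hRsymm x₃ x₁, hRsymm x₃ x₂, hRsymm x₄ x₁, hRsymm x₄ x₂, hRsymm x₄ x₃, hRsymm X x₁, hRsymm X x₂, hRsymm X x₃, hRsymm X x₄, hRsymm Y x₁, hRsymm Y x₂, hRsymm Y x₃, hRsymm Y x₄, hRsymm Y X,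
      hgsymm x₂ x₁, hgsymm x₃ x₁, hgsymm x₃ x₂, hgsymm x₄ x₁, hgsymm x₄ x₂, hgsymm x₄ x₃, hgsymm X x₁, hgsymm X x₂, hgsymm X x₃, hgsymm X x₄, hgsymm Y x₁, hgsymm Y x₂, hgsymm Y x₃, hgsymm Y x₄, hgsymm Y X]
    ring
  have hBgR : ∀ x₁ x₂ x₃ x₄ X Y : V, dot4 ℬB (KN (fun X Y => g X Y) Ric) x₁ x₂ x₃ x₄ X Y
      = (-φ*A2 + μ*A1 + η) * KN4 (fun X Y => g X Y) q4 x₁ x₂ x₃ x₄ X Y := by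
    intro x₁ x₂ x₃ x₄ X Y
    simp only [dot4, hBB]
    simp only [KN, KN4, hq4]
    simp only [map_add, map_sub, map_smul, LinearMap.add_apply, LinearMap.sub_apply,
      LinearMap.smul_apply, smul_eq_mul, hRadd1, hRadd2, hRsub1, hRsub2, hRsmul1, hRsmul2]
    simp only [hgS1, hgS2, hRS1, hRS2]
    simp only [hRsymm x₂ x₁, hRsymm x₃ x₁, hRsymm x₃ x₂, hRsymm x₄ x₁, hRsymm x₄ x₂, hRsymm x₄ x₃, hRsymm X x₁, hRsymm X x₂, hRsymm X x₃, hRsymm X x₄, hRsymm Y x₁, hRsymm Y x₂, hRsymm Y x₃, hRsymm Y x₄, hRsymm Y X,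
      hgsymm x₂ x₁, hgsymm x₃ x₁, hgsymm x₃ x₂, hgsymm x₄ x₁, hgsymm x₄ x₂, hgsymm x₄ x₃, hgsymm X x₁, hgsymm X x₂, hgsymm X x₃, hgsymm X x₄, hgsymm Y x₁, hgsymm Y x₂, hgsymm Y x₃, hgsymm Y x₄, hgsymm Y X]
    ring
  have hBgg : ∀ x₁ x₂ x₃ x₄ X Y : V, dot4 ℬB (KN (fun X Y => g X Y) (fun X Y => g X Y)) x₁ x₂ x₃ x₄ X Y
      = 0 := by
    intro x₁ x₂ x₃ x₄ X Y
    simp only [dot4, hBB]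
    simp only [KN, KN4, hq4]
    simp only [map_add, map_sub, map_smul, LinearMap.add_apply, LinearMap.sub_apply,
      LinearMap.smul_apply, smul_eq_mul, hRadd1, hRadd2, hRsub1, hRsub2, hRsmul1, hRsmul2]
    simp only [hgS1, hgS2, hRS1, hRS2]
    simp only [hRsymm x₂ x₁, hRsymm x₃ x₁, hRsymm x₃ x₂, hRsymm x₄ x₁, hRsymm x₄ x₂, hRsymm x₄ x₃, hRsymm X x₁, hRsymm X x₂, hRsymm X x₃, hRsymm X x₄, hRsymm Y x₁, hRsymm Y x₂, hRsymm Y x₃, hRsymm Y x₄, hRsymm Y X,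
      hgsymm x₂ x₁, hgsymm x₃ x₁, hgsymm x₃ x₂, hgsymm x₄ x₁, hgsymm x₄ x₂, hgsymm x₄ x₃, hgsymm X x₁, hgsymm X x₂, hgsymm X x₃, hgsymm X x₄, hgsymm Y x₁, hgsymm Y x₂, hgsymm Y x₃, hgsymm Y x₄, hgsymm Y X]
    ring
  have hWRR : ∀ x₁ x₂ x₃ x₄ X Y : V, dot4 ℬW (KN Ric Ric) x₁ x₂ x₃ x₄ X Y
      = (-2*φ*A2 + 2*Mp*A1 + 2*Ep) * KN4 Ric q4 x₁ x₂ x₃ x₄ X Y := by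
    intro x₁ x₂ x₃ x₄ X Y
    simp only [dot4, hBW]
    simp only [KN, KN4, hq4]
    simp only [map_add, map_sub, map_smul, LinearMap.add_apply, LinearMap.sub_apply,
      LinearMap.smul_apply, smul_eq_mul, hRadd1, hRadd2, hRsub1, hRsub2, hRsmul1, hRsmul2]
    simp only [hgS1, hgS2, hRS1, hRS2]
    simp only [hRsymm x₂ x₁, hRsymm x₃ x₁, hRsymm x₃ x₂, hRsymm x₄ x₁, hRsymm x₄ x₂, hRsymm x₄ x₃, hRsymm X x₁, hRsymm X x₂, hRsymm X x₃, hRsymm X x₄, hRsymm Y x₁, hRsymm Y x₂, hRsymm Y x₃, hRsymm Y x₄, hRsymm Y X,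
      hgsymm x₂ x₁, hgsymm x₃ x₁, hgsymm x₃ x₂, hgsymm x₄ x₁, hgsymm x₄ x₂, hgsymm x₄ x₃, hgsymm X x₁, hgsymm X x₂, hgsymm X x₃, hgsymm X x₄, hgsymm Y x₁, hgsymm Y x₂, hgsymm Y x₃, hgsymm Y x₄, hgsymm Y X]
    ring
  have hWgR : ∀ x₁ x₂ x₃ x₄ X Y : V, dot4 ℬW (KN (fun X Y => g X Y) Ric) x₁ x₂ x₃ x₄ X Y
      = (-φ*A2 + Mp*A1 + Ep) * KN4 (fun X Y => g X Y) q4 x₁ x₂ x₃ x₄ X Y := by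
    intro x₁ x₂ x₃ x₄ X Y
    simp only [dot4, hBW]
    simp only [KN, KN4, hq4]
    simp only [map_add, map_sub, map_smul, LinearMap.add_apply, LinearMap.sub_apply,
      LinearMap.smul_apply, smul_eq_mul, hRadd1, hRadd2, hRsub1, hRsub2, hRsmul1, hRsmul2]
    simp only [hgS1, hgS2, hRS1, hRS2]
    simp only [hRsymm x₂ x₁, hRsymm x₃ x₁, hRsymm x₃ x₂, hRsymm x₄ x₁, hRsymm x₄ x₂, hRsymm x₄ x₃, hRsymm X x₁, hRsymm X x₂, hRsymm X x₃, hRsymm X x₄, hRsymm Y x₁, hRsymm Y x₂, hRsymm Y x₃, hRsymm Y x₄, hRsymm Y X,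
      hgsymm x₂ x₁, hgsymm x₃ x₁, hgsymm x₃ x₂, hgsymm x₄ x₁, hgsymm x₄ x₂, hgsymm x₄ x₃, hgsymm X x₁, hgsymm X x₂, hgsymm X x₃, hgsymm X x₄, hgsymm Y x₁, hgsymm Y x₂, hgsymm Y x₃, hgsymm Y x₄, hgsymm Y X]
    ring
  have hWgg : ∀ x₁ x₂ x₃ x₄ X Y : V, dot4 ℬW (KN (fun X Y => g X Y) (fun X Y => g X Y)) x₁ x₂ x₃ x₄ X Y
      = 0 := by
    intro x₁ x₂ x₃ x₄ X Y
    simp only [dot4, hBW]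
    simp only [KN, KN4, hq4]
    simp only [map_add, map_sub, map_smul, LinearMap.add_apply, LinearMap.sub_apply,
      LinearMap.smul_apply, smul_eq_mul, hRadd1, hRadd2, hRsub1, hRsub2, hRsmul1, hRsmul2]
    simp only [hgS1, hgS2, hRS1, hRS2]
    simp only [hRsymm x₂ x₁, hRsymm x₃ x₁, hRsymm x₃ x₂, hRsymm x₄ x₁, hRsymm x₄ x₂, hRsymm x₄ x₃, hRsymm X x₁, hRsymm X x₂, hRsymm X x₃, hRsymm X x₄, hRsymm Y x₁, hRsymm Y x₂, hRsymm Y x₃, hRsymm Y x₄, hRsymm Y X,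
      hgsymm x₂ x₁, hgsymm x₃ x₁, hgsymm x₃ x₂, hgsymm x₄ x₁, hgsymm x₄ x₂, hgsymm x₄ x₃, hgsymm X x₁, hgsymm X x₂, hgsymm X x₃, hgsymm X x₄, hgsymm Y x₁, hgsymm Y x₂, hgsymm Y x₃, hgsymm Y x₄, hgsymm Y X]
    ring
  have hQRRR : ∀ x₁ x₂ x₃ x₄ X Y : V, dot4 (wedgeVec Ric) (KN Ric Ric) x₁ x₂ x₃ x₄ X Y
      = 0 := by
    intro x₁ x₂ x₃ x₄ X Y
    simp only [dot4, wedgeVec, KN, KN4, hq4]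
    simp only [map_add, map_sub, map_smul, LinearMap.add_apply, LinearMap.sub_apply,
      LinearMap.smul_apply, smul_eq_mul, hRadd1, hRadd2, hRsub1, hRsub2, hRsmul1, hRsmul2]
    simp only [hRsymm x₂ x₁, hRsymm x₃ x₁, hRsymm x₃ x₂, hRsymm x₄ x₁, hRsymm x₄ x₂, hRsymm x₄ x₃, hRsymm X x₁, hRsymm X x₂, hRsymm X x₃, hRsymm X x₄, hRsymm Y x₁, hRsymm Y x₂, hRsymm Y x₃, hRsymm Y x₄, hRsymm Y X,
      hgsymm x₂ x₁, hgsymm x₃ x₁, hgsymm x₃ x₂, hgsymm x₄ x₁, hgsymm x₄ x₂, hgsymm x₄ x₃, hgsymm X x₁, hgsymm X x₂, hgsymm X x₃, hgsymm X x₄, hgsymm Y x₁, hgsymm Y x₂, hgsymm Y x₃, hgsymm Y x₄, hgsymm Y X]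
    ring
  have hQRgR : ∀ x₁ x₂ x₃ x₄ X Y : V, dot4 (wedgeVec Ric) (KN (fun X Y => g X Y) Ric) x₁ x₂ x₃ x₄ X Y
      = (-1 : ℝ) * KN4 Ric q4 x₁ x₂ x₃ x₄ X Y := by
    intro x₁ x₂ x₃ x₄ X Y
    simp only [dot4, wedgeVec, KN, KN4, hq4]
    simp only [map_add, map_sub, map_smul, LinearMap.add_apply, LinearMap.sub_apply,
      LinearMap.smul_apply, smul_eq_mul, hRadd1, hRadd2, hRsub1, hRsub2, hRsmul1, hRsmul2]
    simp only [hRsymm x₂ x₁, hRsymm x₃ x₁, hRsymm x₃ x₂, hRsymm x₄ x₁, hRsymm x₄ x₂, hRsymm x₄ x₃, hRsymm X x₁, hRsymm X x₂, hRsymm X x₃, hRsymm X x₄, hRsymm Y x₁, hRsymm Y x₂, hRsymm Y x₃, hRsymm Y x₄, hRsymm Y X,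
      hgsymm x₂ x₁, hgsymm x₃ x₁, hgsymm x₃ x₂, hgsymm x₄ x₁, hgsymm x₄ x₂, hgsymm x₄ x₃, hgsymm X x₁, hgsymm X x₂, hgsymm X x₃, hgsymm X x₄, hgsymm Y x₁, hgsymm Y x₂, hgsymm Y x₃, hgsymm Y x₄, hgsymm Y X]
    ring
  have hQRgg : ∀ x₁ x₂ x₃ x₄ X Y : V, dot4 (wedgeVec Ric) (KN (fun X Y => g X Y) (fun X Y => g X Y)) x₁ x₂ x₃ x₄ X Y
      = (-2 : ℝ) * KN4 (fun X Y => g X Y) q4 x₁ x₂ x₃ x₄ X Y := by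
    intro x₁ x₂ x₃ x₄ X Y
    simp only [dot4, wedgeVec, KN, KN4, hq4]
    simp only [map_add, map_sub, map_smul, LinearMap.add_apply, LinearMap.sub_apply,
      LinearMap.smul_apply, smul_eq_mul, hRadd1, hRadd2, hRsub1, hRsub2, hRsmul1, hRsmul2]
    simp only [hRsymm x₂ x₁, hRsymm x₃ x₁, hRsymm x₃ x₂, hRsymm x₄ x₁, hRsymm x₄ x₂, hRsymm x₄ x₃, hRsymm X x₁, hRsymm X x₂, hRsymm X x₃, hRsymm X x₄, hRsymm Y x₁, hRsymm Y x₂, hRsymm Y x₃, hRsymm Y x₄, hRsymm Y X,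
      hgsymm x₂ x₁, hgsymm x₃ x₁, hgsymm x₃ x₂, hgsymm x₄ x₁, hgsymm x₄ x₂, hgsymm x₄ x₃, hgsymm X x₁, hgsymm X x₂, hgsymm X x₃, hgsymm X x₄, hgsymm Y x₁, hgsymm Y x₂, hgsymm Y x₃, hgsymm Y x₄, hgsymm Y X]
    ring
  have hQgRR : ∀ x₁ x₂ x₃ x₄ X Y : V, dot4 (wedgeVec (fun X Y => g X Y)) (KN Ric Ric) x₁ x₂ x₃ x₄ X Y
      = (2 : ℝ) * KN4 Ric q4 x₁ x₂ x₃ x₄ X Y := by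
    intro x₁ x₂ x₃ x₄ X Y
    simp only [dot4, wedgeVec, KN, KN4, hq4]
    simp only [map_add, map_sub, map_smul, LinearMap.add_apply, LinearMap.sub_apply,
      LinearMap.smul_apply, smul_eq_mul, hRadd1, hRadd2, hRsub1, hRsub2, hRsmul1, hRsmul2]
    simp only [hRsymm x₂ x₁, hRsymm x₃ x₁, hRsymm x₃ x₂, hRsymm x₄ x₁, hRsymm x₄ x₂, hRsymm x₄ x₃, hRsymm X x₁, hRsymm X x₂, hRsymm X x₃, hRsymm X x₄, hRsymm Y x₁, hRsymm Y x₂, hRsymm Y x₃, hRsymm Y x₄, hRsymm Y X,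
      hgsymm x₂ x₁, hgsymm x₃ x₁, hgsymm x₃ x₂, hgsymm x₄ x₁, hgsymm x₄ x₂, hgsymm x₄ x₃, hgsymm X x₁, hgsymm X x₂, hgsymm X x₃, hgsymm X x₄, hgsymm Y x₁, hgsymm Y x₂, hgsymm Y x₃, hgsymm Y x₄, hgsymm Y X]
    ring
  have hQggR : ∀ x₁ x₂ x₃ x₄ X Y : V, dot4 (wedgeVec (fun X Y => g X Y)) (KN (fun X Y => g X Y) Ric) x₁ x₂ x₃ x₄ X Y
      = KN4 (fun X Y => g X Y) q4 x₁ x₂ x₃ x₄ X Y := by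
    intro x₁ x₂ x₃ x₄ X Y
    simp only [dot4, wedgeVec, KN, KN4, hq4]
    simp only [map_add, map_sub, map_smul, LinearMap.add_apply, LinearMap.sub_apply,
      LinearMap.smul_apply, smul_eq_mul, hRadd1, hRadd2, hRsub1, hRsub2, hRsmul1, hRsmul2]
    simp only [hRsymm x₂ x₁, hRsymm x₃ x₁, hRsymm x₃ x₂, hRsymm x₄ x₁, hRsymm x₄ x₂, hRsymm x₄ x₃, hRsymm X x₁, hRsymm X x₂, hRsymm X x₃, hRsymm X x₄, hRsymm Y x₁, hRsymm Y x₂, hRsymm Y x₃, hRsymm Y x₄, hRsymm Y X,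
      hgsymm x₂ x₁, hgsymm x₃ x₁, hgsymm x₃ x₂, hgsymm x₄ x₁, hgsymm x₄ x₂, hgsymm x₄ x₃, hgsymm X x₁, hgsymm X x₂, hgsymm X x₃, hgsymm X x₄, hgsymm Y x₁, hgsymm Y x₂, hgsymm Y x₃, hgsymm Y x₄, hgsymm Y X]
    ring
  have hQggg : ∀ x₁ x₂ x₃ x₄ X Y : V, dot4 (wedgeVec (fun X Y => g X Y)) (KN (fun X Y => g X Y) (fun X Y => g X Y)) x₁ x₂ x₃ x₄ X Y
      = 0 := by
    intro x₁ x₂ x₃ x₄ X Y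
    simp only [dot4, wedgeVec, KN, KN4, hq4]
    simp only [map_add, map_sub, map_smul, LinearMap.add_apply, LinearMap.sub_apply,
      LinearMap.smul_apply, smul_eq_mul, hRadd1, hRadd2, hRsub1, hRsub2, hRsmul1, hRsmul2]
    simp only [hRsymm x₂ x₁, hRsymm x₃ x₁, hRsymm x₃ x₂, hRsymm x₄ x₁, hRsymm x₄ x₂, hRsymm x₄ x₃, hRsymm X x₁, hRsymm X x₂, hRsymm X x₃, hRsymm X x₄, hRsymm Y x₁, hRsymm Y x₂, hRsymm Y x₃, hRsymm Y x₄, hRsymm Y X,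
      hgsymm x₂ x₁, hgsymm x₃ x₁, hgsymm x₃ x₂, hgsymm x₄ x₁, hgsymm x₄ x₂, hgsymm x₄ x₃, hgsymm X x₁, hgsymm X x₂, hgsymm X x₃, hgsymm X x₄, hgsymm Y x₁, hgsymm Y x₂, hgsymm Y x₃, hgsymm Y x₄, hgsymm Y X]
    ring
  have hsplitWB : ∀ x₁ x₂ x₃ x₄ X Y : V, dot4 ℬW Bf x₁ x₂ x₃ x₄ X Y
      = (φ/2) * dot4 ℬW (KN Ric Ric) x₁ x₂ x₃ x₄ X Y
        + μ * dot4 ℬW (KN (fun X Y => g X Y) Ric) x₁ x₂ x₃ x₄ X Y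
        + (η/2) * dot4 ℬW (KN (fun X Y => g X Y) (fun X Y => g X Y)) x₁ x₂ x₃ x₄ X Y := by
    intro x₁ x₂ x₃ x₄ X Y
    simp only [dot4, hRoter]
    ring
  have hsplitBW : ∀ x₁ x₂ x₃ x₄ X Y : V, dot4 ℬB Wl x₁ x₂ x₃ x₄ X Y
      = (φ/2) * dot4 ℬB (KN Ric Ric) x₁ x₂ x₃ x₄ X Y
        + Mp * dot4 ℬB (KN (fun X Y => g X Y) Ric) x₁ x₂ x₃ x₄ X Y
        + (Ep/2) * dot4 ℬB (KN (fun X Y => g X Y) (fun X Y => g X Y)) x₁ x₂ x₃ x₄ X Y := by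
    intro x₁ x₂ x₃ x₄ X Y
    simp only [dot4, hWlR]
    ring
  have hsplitQR : ∀ x₁ x₂ x₃ x₄ X Y : V, Q4 Ric Wl x₁ x₂ x₃ x₄ X Y
      = (φ/2) * dot4 (wedgeVec Ric) (KN Ric Ric) x₁ x₂ x₃ x₄ X Y
        + Mp * dot4 (wedgeVec Ric) (KN (fun X Y => g X Y) Ric) x₁ x₂ x₃ x₄ X Y
        + (Ep/2) * dot4 (wedgeVec Ric) (KN (fun X Y => g X Y) (fun X Y => g X Y)) x₁ x₂ x₃ x₄ X Y := by
    intro x₁ x₂ x₃ x₄ X Y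
    simp only [Q4, dot4, hWlR]
    ring
  have hsplitQg : ∀ x₁ x₂ x₃ x₄ X Y : V, Q4 (fun X Y => g X Y) Wl x₁ x₂ x₃ x₄ X Y
      = (φ/2) * dot4 (wedgeVec (fun X Y => g X Y)) (KN Ric Ric) x₁ x₂ x₃ x₄ X Y
        + Mp * dot4 (wedgeVec (fun X Y => g X Y)) (KN (fun X Y => g X Y) Ric) x₁ x₂ x₃ x₄ X Y
        + (Ep/2) * dot4 (wedgeVec (fun X Y => g X Y)) (KN (fun X Y => g X Y) (fun X Y => g X Y)) x₁ x₂ x₃ x₄ X Y := by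
    intro x₁ x₂ x₃ x₄ X Y
    simp only [Q4, dot4, hWlR]
    ring
  intro X₁ X₂ X₃ X₄ X Y
  rw [hsplitWB, hsplitBW, hsplitQR, hsplitQg,
    hBRR, hBgR, hBgg, hWRR, hWgR, hWgg,
    hQRRR, hQRgR, hQRgg, hQgRR, hQggR, hQggg,
    part1]
  subst hLB
  rw [hA1, hA2, hMp, hEp]
  field_simp
  ring

end OVAff
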